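/- arXiv:2101.06816 — 6 statements merged into one kernel-verified Lean document; each statement's English description precedes it below -/
import Mathlib

section
/- Let K ≥ 2 and let A, B be K×K real matrices such that B i j > 0 for all i, j, A i j ≥ B i j for all i, j, and A i j > B i j whenever i ≠ j. Then for every natural number M ≥ 2, every entry of A^M is strictly greater than the corresponding entry of B^M; in particular trace(A^M) > trace(B^M). -/
open Matrix

theorem stmt_1 (K : ℕ) (hK : 2 ≤ K) (A B : Matrix (Fin K) (Fin K) ℝ)
    (hBpos : ∀ i j, 0 < B i j)
    (hle : ∀ i j, B i j ≤ A i j)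
    (hlt : ∀ i j, i ≠ j → B i j < A i j) :
    ∀ M : ℕ, 2 ≤ M →
      (∀ i j, (B ^ M) i j < (A ^ M) i j) ∧ (B ^ M).trace < (A ^ M).trace := by
  have hBn : ∀ n, ∀ i j : Fin K, 0 ≤ (B ^ n) i j := by
    intro n
    induction n with
    | zero => intro i j; rw [pow_zero]; by_cases h : i = j <;>
        simp [Matrix.one_apply, h]
    | succ n ih =>
      intro i j
      rw [pow_succ, Matrix.mul_apply]
      exact Finset.sum_nonneg fun k _ => mul_nonneg (ih i k) (hBpos k j).le
  have hBdiag : ∀ n, ∀ j : Fin K, 0 < (B ^ n) j j := by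
    intro n
    induction n with
    | zero => intro j; simp [Matrix.one_apply]
    | succ n ih =>
      intro j
      rw [pow_succ, Matrix.mul_apply]
      refine Finset.sum_pos' (fun k _ => mul_nonneg (hBn n j k) (hBpos k j).le) ?_
      exact ⟨j, Finset.mem_univ j, mul_pos (ih j) (hBpos j j)⟩
  have hpowle : ∀ n, ∀ i j : Fin K, (B ^ n) i j ≤ (A ^ n) i j := by
    intro n
    induction n with
    | zero => intro i j; exact le_refl _
    | succ n ih =>
      intro i j
      rw [pow_succ, pow_succ, Matrix.mul_apply, Matrix.mul_apply]
      refine Finset.sum_le_sum fun k _ => ?_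
      exact mul_le_mul (ih i k) (hle k j) (hBpos k j).le
        (le_trans (hBn n i k) (ih i k))
  have hAn : ∀ n, ∀ i j : Fin K, 0 ≤ (A ^ n) i j :=
    fun n i j => le_trans (hBn n i j) (hpowle n i j)
  have hsq : ∀ i j : Fin K, (B ^ 2) i j < (A ^ 2) i j := by
    intro i j
    rw [pow_two, pow_two, Matrix.mul_apply, Matrix.mul_apply]
    obtain ⟨k, hk⟩ : ∃ k : Fin K, k ≠ i := by
      have : 1 < Fintype.card (Fin K) := by rw [Fintype.card_fin]; omega
      exact Fintype.exists_ne_of_one_lt_card this i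
    refine Finset.sum_lt_sum (fun m _ => ?_) ⟨k, Finset.mem_univ k, ?_⟩
    · exact mul_le_mul (hle i m) (hle m j) (hBpos m j).le
        (le_trans (hBpos i m).le (hle i m))
    · calc B i k * B k j < A i k * B k j :=
            mul_lt_mul_of_pos_right (hlt i k (Ne.symm hk)) (hBpos k j)
        _ ≤ A i k * A k j :=
            mul_le_mul_of_nonneg_left (hle k j)
              (le_trans (hBpos i k).le (hle i k))
  intro M hM
  obtain ⟨n, rfl⟩ : ∃ n, M = 2 + n := ⟨M - 2, by omega⟩
  have key : ∀ i j : Fin K, (B ^ (2 + n)) i j < (A ^ (2 + n)) i j := by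
    intro i j
    rw [pow_add, pow_add, Matrix.mul_apply, Matrix.mul_apply]
    refine Finset.sum_lt_sum (fun k _ => ?_) ⟨j, Finset.mem_univ j, ?_⟩
    · exact mul_le_mul (hpowle 2 i k) (hpowle n k j) (hBn n k j)
        (hAn 2 i k)
    · calc (B ^ 2) i j * (B ^ n) j j < (A ^ 2) i j * (B ^ n) j j :=
            mul_lt_mul_of_pos_right (hsq i j) (hBdiag n j)
        _ ≤ (A ^ 2) i j * (A ^ n) j j :=
            mul_le_mul_of_nonneg_left (hpowle n j j) (hAn 2 i j)
  refine ⟨key, ?_⟩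
  unfold Matrix.trace
  refine Finset.sum_lt_sum_of_nonempty ?_ fun i _ => key i i
  exact ⟨⟨0, by omega⟩, Finset.mem_univ _⟩
end

section
/- Let N ≥ K ≥ 1 with K ≤ N, let c > 0 and φ be real numbers. For a strictly monotone selection map s : Fin K → Fin N define the K×K complex matrix R_s with (i,j) entry exp(I·φ·((s i : ℝ) − (s j : ℝ))) · exp(−c·((s i : ℝ) − (s j : ℝ))²). Then each R_s is Hermitian, and for the consecutive (uniform linear array) selection u : Fin K → Fin N given by u i = i (via the inclusion Fin K ↪ Fin N), the largest eigenvalue of R_u is greater than or equal to the largest eigenvalue of R_s for every strictly monotone selection s. -/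
open Matrix Finset

lemma stmt4_rayleigh_le {n : Type*} [Fintype n] [DecidableEq n] [Nonempty n]
    {A : Matrix n n ℂ} (hA : A.IsHermitian) (x : n → ℂ) :
    Complex.re (star x ⬝ᵥ A *ᵥ x) ≤ (⨆ i, hA.eigenvalues i) * Complex.re (star x ⬝ᵥ x) := by
  set U : Matrix n n ℂ := ↑(hA.eigenvectorUnitary) with hU
  set y : n → ℂ := star U *ᵥ x with hy
  have hUU : U * star U = 1 := mem_unitaryGroup_iff.mp hA.eigenvectorUnitary.2
  have hstary : star y = star x ᵥ* U := by
    rw [hy, star_mulVec]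
    simp [Matrix.star_eq_conjTranspose]
  have h1 : star x ⬝ᵥ A *ᵥ x = star y ⬝ᵥ (diagonal (RCLike.ofReal ∘ hA.eigenvalues) *ᵥ y) := by
    conv_lhs => rw [hA.spectral_theorem, Unitary.conjStarAlgAut_apply]
    rw [← Matrix.mulVec_mulVec, ← Matrix.mulVec_mulVec, Matrix.dotProduct_mulVec, ← hstary, hy]
  have hterm : ∀ i, star y i * ((diagonal (RCLike.ofReal ∘ hA.eigenvalues) *ᵥ y) i)
      = ((hA.eigenvalues i * Complex.normSq (y i) : ℝ) : ℂ) := by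
    intro i
    rw [Matrix.mulVec_diagonal]
    push_cast
    have : (starRingEnd ℂ) (y i) * y i = (Complex.normSq (y i) : ℂ) := by
      rw [mul_comm, Complex.mul_conj]
    calc star (y i) * ((hA.eigenvalues i : ℂ) * y i)
        = (hA.eigenvalues i : ℂ) * ((starRingEnd ℂ) (y i) * y i) := by
          simp [Complex.star_def]; ring
      _ = (hA.eigenvalues i : ℂ) * (Complex.normSq (y i) : ℂ) := by rw [this]
  have h3 : Complex.re (star y ⬝ᵥ (diagonal (RCLike.ofReal ∘ hA.eigenvalues) *ᵥ y))
      = ∑ i, hA.eigenvalues i * Complex.normSq (y i) := by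
    rw [dotProduct, Complex.re_sum]
    exact Finset.sum_congr rfl fun i _ => by rw [hterm i, Complex.ofReal_re]
  have h2 : star y ⬝ᵥ y = star x ⬝ᵥ x := by
    rw [hstary, hy, ← Matrix.dotProduct_mulVec, Matrix.mulVec_mulVec]
    rw [show U * star U = 1 from hUU, Matrix.one_mulVec]
  have h5 : Complex.re (star x ⬝ᵥ x) = ∑ i, Complex.normSq (y i) := by
    rw [← h2, dotProduct, Complex.re_sum]
    exact Finset.sum_congr rfl fun i _ => by
      simp [Complex.star_def, mul_comm, Complex.mul_conj]
  have h4 : ∑ i, hA.eigenvalues i * Complex.normSq (y i)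
      ≤ (⨆ i, hA.eigenvalues i) * ∑ i, Complex.normSq (y i) := by
    rw [Finset.mul_sum]
    refine Finset.sum_le_sum fun i _ => ?_
    exact mul_le_mul_of_nonneg_right
      (le_ciSup (Set.Finite.bddAbove (Set.finite_range _)) i) (Complex.normSq_nonneg _)
  rw [h1, h3, h5]
  exact h4

lemma stmt4_gap_aux {K N : ℕ} {s : Fin K → Fin N} (hs : StrictMono s) :
    ∀ d (j i : Fin K), (j : ℕ) + d = i → (s j : ℕ) + d ≤ s i := by
  intro d
  induction d with
  | zero =>
    intro j i h
    have : j = i := Fin.ext (by omega)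
    simp [this]
  | succ d ih =>
    intro j i h
    have hlt : (j : ℕ) + d < K := by have := i.isLt; omega
    have h1 := ih j ⟨(j : ℕ) + d, hlt⟩ rfl
    have h2 : s ⟨(j : ℕ) + d, hlt⟩ < s i := hs (Fin.lt_def.mpr (by simp only [Fin.val_mk]; omega))
    rw [Fin.lt_def] at h2
    omega

lemma stmt4_sq_gap {K N : ℕ} {s : Fin K → Fin N} (hs : StrictMono s) (i j : Fin K) :
    (((i : ℕ) : ℝ) - ((j : ℕ) : ℝ)) ^ 2 ≤ (((s i : ℕ) : ℝ) - ((s j : ℕ) : ℝ)) ^ 2 := by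
  rcases le_total (j : ℕ) (i : ℕ) with h | h
  · have h1 := stmt4_gap_aux hs ((i : ℕ) - (j : ℕ)) j i (by omega)
    have h2 : ((i : ℕ) : ℝ) - ((j : ℕ) : ℝ) ≤ ((s i : ℕ) : ℝ) - ((s j : ℕ) : ℝ) := by
      have := Nat.cast_le (α := ℝ).mpr h1
      push_cast [Nat.cast_sub h] at this
      linarith
    have h3 : (0 : ℝ) ≤ ((i : ℕ) : ℝ) - ((j : ℕ) : ℝ) := by
      have := Nat.cast_le (α := ℝ).mpr h
      linarith
    nlinarith
  · have h1 := stmt4_gap_aux hs ((j : ℕ) - (i : ℕ)) i j (by omega)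
    have h2 : ((j : ℕ) : ℝ) - ((i : ℕ) : ℝ) ≤ ((s j : ℕ) : ℝ) - ((s i : ℕ) : ℝ) := by
      have := Nat.cast_le (α := ℝ).mpr h1
      push_cast [Nat.cast_sub h] at this
      linarith
    have h3 : (0 : ℝ) ≤ ((j : ℕ) : ℝ) - ((i : ℕ) : ℝ) := by
      have := Nat.cast_le (α := ℝ).mpr h
      linarith
    nlinarith

lemma stmt4_herm_entry (c φ a b : ℝ) :
    star (Complex.exp (Complex.I * (φ : ℂ) * ((b - a : ℝ) : ℂ)) *
        Complex.exp (-((c * (b - a) ^ 2 : ℝ) : ℂ))) =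
      Complex.exp (Complex.I * (φ : ℂ) * ((a - b : ℝ) : ℂ)) *
        Complex.exp (-((c * (a - b) ^ 2 : ℝ) : ℂ)) := by
  rw [star_mul']
  simp only [Complex.star_def, ← Complex.exp_conj, map_sub, _root_.map_mul, map_neg,
    Complex.conj_I, Complex.conj_ofReal, map_pow]
  congr 1
  · congr 1; push_cast; ring
  · congr 1; push_cast; ring

lemma stmt4_phase_cancel (t r : ℝ) :
    (starRingEnd ℂ) (Complex.exp (Complex.I * (t : ℂ) * (r : ℂ))) *
      Complex.exp (Complex.I * (t : ℂ) * (r : ℂ)) = 1 := by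
  rw [← Complex.exp_conj, ← Complex.exp_add, ← Complex.exp_zero]
  congr 1
  simp only [_root_.map_mul, Complex.conj_I, Complex.conj_ofReal]
  ring

lemma stmt4_abs_entry (φ r g : ℝ) :
    ‖Complex.exp (Complex.I * (φ : ℂ) * (r : ℂ)) * Complex.exp (-(g : ℂ))‖
      = Real.exp (-g) := by
  rw [norm_mul, Complex.norm_exp, Complex.norm_exp]
  simp [Complex.mul_re]

lemma stmt4_abs_phase (t r : ℝ) :
    ‖Complex.exp (Complex.I * (t : ℂ) * (r : ℂ))‖ = 1 := by
  rw [Complex.norm_exp]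
  simp [Complex.mul_re]

theorem stmt_4 (N K : ℕ) (hK : 1 ≤ K) (hKN : K ≤ N) (c φ : ℝ) (hc : 0 < c)
    (R : (Fin K → Fin N) → Matrix (Fin K) (Fin K) ℂ)
    (hR : ∀ s : Fin K → Fin N, R s = Matrix.of fun i j =>
      Complex.exp (Complex.I * (φ : ℂ) * (((((s i : ℕ) : ℝ) - ((s j : ℕ) : ℝ)) : ℝ) : ℂ)) *
        Complex.exp (-(((c * (((s i : ℕ) : ℝ) - ((s j : ℕ) : ℝ)) ^ 2) : ℝ) : ℂ)))
    (u : Fin K → Fin N) (hu : ∀ i : Fin K, (u i : ℕ) = (i : ℕ)) :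
    ∀ s : Fin K → Fin N, StrictMono s →
      ∃ (hs : (R s).IsHermitian) (hu' : (R u).IsHermitian),
        (⨆ i, hs.eigenvalues i) ≤ ⨆ i, hu'.eigenvalues i := by
  have hne : Nonempty (Fin K) := ⟨⟨0, hK⟩⟩
  have herm : ∀ t : Fin K → Fin N, (R t).IsHermitian := by
    intro t
    rw [hR t]
    ext i j
    rw [conjTranspose_apply, of_apply, of_apply]
    exact stmt4_herm_entry c φ _ _
  intro s hsm
  refine ⟨herm s, herm u, ?_⟩
  refine ciSup_le fun i0 => ?_
  set x : Fin K → ℂ := ⇑((herm s).eigenvectorBasis i0) with hxdef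
  set v : Fin K → ℝ := fun i => ‖x i‖ with hv
  have hvnn : ∀ i, 0 ≤ v i := fun i => norm_nonneg _
  set g : Fin K → Fin K → ℝ :=
    fun i j => Real.exp (-(c * (((i : ℕ) : ℝ) - ((j : ℕ) : ℝ)) ^ 2)) with hg
  -- entries of R s and R u
  have hAentry : ∀ i j, (R s) i j =
      Complex.exp (Complex.I * (φ : ℂ) * (((((s i : ℕ) : ℝ) - ((s j : ℕ) : ℝ)) : ℝ) : ℂ)) *
        Complex.exp (-(((c * (((s i : ℕ) : ℝ) - ((s j : ℕ) : ℝ)) ^ 2) : ℝ) : ℂ)) := by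
    intro i j; rw [hR s]; rfl
  have hBentry : ∀ i j, (R u) i j =
      Complex.exp (Complex.I * (φ : ℂ) * (((((i : ℕ) : ℝ) - ((j : ℕ) : ℝ)) : ℝ) : ℂ)) *
        Complex.exp (-(((c * (((i : ℕ) : ℝ) - ((j : ℕ) : ℝ)) ^ 2) : ℝ) : ℂ)) := by
    intro i j; rw [hR u]; simp only [of_apply, hu]
  -- Step 1
  have e1 : (herm s).eigenvalues i0 = Complex.re (star x ⬝ᵥ (R s) *ᵥ x) :=
    (herm s).eigenvalues_eq i0
  have e2 : star x ⬝ᵥ (R s) *ᵥ x = ∑ i, ∑ j, star (x i) * ((R s) i j * x j) := by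
    simp [dotProduct, Matrix.mulVec, Finset.mul_sum]
  have e3 : ∀ i j, ‖star (x i) * ((R s) i j * x j)‖
      = v i * v j * Real.exp (-(c * ((((s i : ℕ) : ℝ) - ((s j : ℕ) : ℝ)) ^ 2))) := by
    intro i j
    rw [norm_mul, norm_mul, hAentry i j, stmt4_abs_entry]
    simp only [hv, Complex.star_def, Complex.norm_conj]
    ring
  have step1 : (herm s).eigenvalues i0 ≤ ∑ i, ∑ j, v i * v j * g i j := by
    rw [e1]
    calc Complex.re (star x ⬝ᵥ (R s) *ᵥ x) ≤ ‖star x ⬝ᵥ (R s) *ᵥ x‖ :=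
          Complex.re_le_norm _
      _ = ‖∑ i, ∑ j, star (x i) * ((R s) i j * x j)‖ := by rw [e2]
      _ ≤ ∑ i, ‖∑ j, star (x i) * ((R s) i j * x j)‖ :=
          norm_sum_le _ _
      _ ≤ ∑ i, ∑ j, ‖star (x i) * ((R s) i j * x j)‖ :=
          Finset.sum_le_sum fun i _ => norm_sum_le _ _
      _ = ∑ i, ∑ j, v i * v j *
            Real.exp (-(c * ((((s i : ℕ) : ℝ) - ((s j : ℕ) : ℝ)) ^ 2))) := by
          exact Finset.sum_congr rfl fun i _ => Finset.sum_congr rfl fun j _ => e3 i j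
      _ ≤ ∑ i, ∑ j, v i * v j * g i j := by
          refine Finset.sum_le_sum fun i _ => Finset.sum_le_sum fun j _ => ?_
          refine mul_le_mul_of_nonneg_left ?_ (mul_nonneg (hvnn i) (hvnn j))
          rw [hg]
          refine Real.exp_le_exp.mpr ?_
          have := stmt4_sq_gap hsm i j
          nlinarith
  -- Step 2
  set w : Fin K → ℂ :=
    fun i => ((v i : ℝ) : ℂ) * Complex.exp (Complex.I * (φ : ℂ) * ((((i : ℕ) : ℝ)) : ℂ)) with hw
  have hterm2 : ∀ i j, star (w i) * ((R u) i j * w j) = ((v i * v j * g i j : ℝ) : ℂ) := by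
    intro i j
    rw [hBentry i j]
    have hsplit : Complex.exp (Complex.I * (φ : ℂ) * (((((i : ℕ) : ℝ) - ((j : ℕ) : ℝ)) : ℝ) : ℂ))
        = Complex.exp (Complex.I * (φ : ℂ) * ((((i : ℕ) : ℝ)) : ℂ)) *
          (starRingEnd ℂ) (Complex.exp (Complex.I * (φ : ℂ) * ((((j : ℕ) : ℝ)) : ℂ))) := by
      rw [← Complex.exp_conj, ← Complex.exp_add]
      congr 1
      simp only [_root_.map_mul, Complex.conj_I, Complex.conj_ofReal]
      push_cast
      ring
    have hG : Complex.exp (-(((c * (((i : ℕ) : ℝ) - ((j : ℕ) : ℝ)) ^ 2) : ℝ) : ℂ))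
        = ((g i j : ℝ) : ℂ) := by
      rw [hg]
      simp only
      rw [Complex.ofReal_exp]
      congr 1
      push_cast
      ring
    rw [hsplit, hG, hw]
    simp only [star_mul', Complex.star_def, Complex.conj_ofReal]
    have pci := stmt4_phase_cancel φ ((i : ℕ) : ℝ)
    have pcj := stmt4_phase_cancel φ ((j : ℕ) : ℝ)
    push_cast at pci pcj ⊢
    linear_combination (((v i : ℂ)) * ((v j : ℂ)) * ((g i j : ℝ) : ℂ) *
        ((starRingEnd ℂ) (Complex.exp (Complex.I * (φ : ℂ) * ((j : ℕ) : ℂ))) *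
          Complex.exp (Complex.I * (φ : ℂ) * ((j : ℕ) : ℂ)))) * pci +
      (((v i : ℂ)) * ((v j : ℂ)) * ((g i j : ℝ) : ℂ)) * pcj
  have step2 : star w ⬝ᵥ (R u) *ᵥ w = ((∑ i, ∑ j, v i * v j * g i j : ℝ) : ℂ) := by
    have : star w ⬝ᵥ (R u) *ᵥ w = ∑ i, ∑ j, star (w i) * ((R u) i j * w j) := by
      simp [dotProduct, Matrix.mulVec, Finset.mul_sum]
    rw [this]
    push_cast
    exact Finset.sum_congr rfl fun i _ => Finset.sum_congr rfl fun j _ => by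
      rw [hterm2 i j]; push_cast; ring
  -- norm of w is 1
  have hx1 : Complex.re (star x ⬝ᵥ x) = 1 := by
    have h1 : star x ⬝ᵥ x = (inner ℂ ((herm s).eigenvectorBasis i0)
        ((herm s).eigenvectorBasis i0) : ℂ) :=
      by rw [EuclideanSpace.inner_eq_star_dotProduct]; exact dotProduct_comm _ _
    rw [h1, inner_self_eq_norm_sq_to_K, (herm s).eigenvectorBasis.orthonormal.1 i0]
    norm_num
  have habsw : ∀ i, ‖w i‖ = v i := by
    intro i
    rw [hw]
    simp only [norm_mul, Complex.norm_real, stmt4_abs_phase, mul_one]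
    exact Real.norm_of_nonneg (hvnn i)
  have hwnorm : Complex.re (star w ⬝ᵥ w) = 1 := by
    have hww : Complex.re (star w ⬝ᵥ w) = ∑ i, Complex.normSq (w i) := by
      rw [dotProduct, Complex.re_sum]
      exact Finset.sum_congr rfl fun i _ => by
        simp [Complex.star_def, mul_comm, Complex.mul_conj]
    have hxx : Complex.re (star x ⬝ᵥ x) = ∑ i, Complex.normSq (x i) := by
      rw [dotProduct, Complex.re_sum]
      exact Finset.sum_congr rfl fun i _ => by
        simp [Complex.star_def, mul_comm, Complex.mul_conj]
    rw [hww, ← hx1, hxx]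
    refine Finset.sum_congr rfl fun i _ => ?_
    rw [← Complex.sq_norm, ← Complex.sq_norm, habsw i, hv]
  calc (herm s).eigenvalues i0 ≤ ∑ i, ∑ j, v i * v j * g i j := step1
    _ = Complex.re (star w ⬝ᵥ (R u) *ᵥ w) := by rw [step2, Complex.ofReal_re]
    _ ≤ (⨆ i, (herm u).eigenvalues i) * Complex.re (star w ⬝ᵥ w) :=
        stmt4_rayleigh_le (herm u) w
    _ = ⨆ i, (herm u).eigenvalues i := by rw [hwnorm, mul_one]
end

section
/- Let N ≥ 1, let R_n be an N×N complex Hermitian positive definite matrix, and let R_s be an N×N complex Hermitian positive semidefinite matrix. Then there exist a vector w ≠ 0 and a real μ ≥ 0 such that R_s *ᵥ w = μ • (R_n *ᵥ w), and for every vector v ≠ 0, Q_{R_s}(v) ≤ μ · Q_{R_n}(v), where Q_R(v) = re(star v ⬝ᵥ (R *ᵥ v)). -/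
open Matrix
open scoped ComplexOrder

theorem stmt_8 (N : ℕ) (hN : 1 ≤ N) (Rn Rs : Matrix (Fin N) (Fin N) ℂ)
    (hRn : Rn.PosDef) (hRs : Rs.PosSemidef) :
    ∃ w : Fin N → ℂ, w ≠ 0 ∧ ∃ μ : ℝ, 0 ≤ μ ∧
      Rs *ᵥ w = (μ : ℂ) • (Rn *ᵥ w) ∧
      ∀ v : Fin N → ℂ, v ≠ 0 →
        (star v ⬝ᵥ (Rs *ᵥ v)).re ≤ μ * (star v ⬝ᵥ (Rn *ᵥ v)).re := by
  haveI : Nonempty (Fin N) := ⟨⟨0, hN⟩⟩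
  set T := (open MatrixOrder in CFC.sqrt Rn) with hTdef
  have hT : T.PosSemidef := by open MatrixOrder in exact (CFC.sqrt_nonneg Rn).posSemidef
  have hTT : T * T = Rn := by open MatrixOrder in exact CFC.sqrt_mul_sqrt_self Rn hRn.posSemidef.nonneg
  have hdet : T.det ≠ 0 := by
    intro h
    have : Rn.det = 0 := by rw [← hTT, det_mul, h, mul_zero]
    exact (ne_of_gt hRn.det_pos) this
  have hTinv : T * T⁻¹ = 1 := mul_nonsing_inv T hdet.isUnit
  have hTinv' : T⁻¹ * T = 1 := nonsing_inv_mul T hdet.isUnit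
  have hTH : Tᴴ = T := hT.1
  have hTiH : (T⁻¹)ᴴ = T⁻¹ := by rw [conjTranspose_nonsing_inv, hTH]
  set S := T⁻¹ * Rs * T⁻¹ with hSdef
  have hS : S.PosSemidef := by
    have := hRs.mul_mul_conjTranspose_same T⁻¹
    rwa [hTiH] at this
  have hSH := hS.1
  obtain ⟨i₀, hi₀⟩ := Finite.exists_max hSH.eigenvalues
  set μ := hSH.eigenvalues i₀ with hμdef
  have hμ0 : 0 ≤ μ := hS.eigenvalues_nonneg i₀
  set u : Fin N → ℂ := ⇑(hSH.eigenvectorBasis i₀) with hudef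
  have hu : S *ᵥ u = (μ : ℂ) • u := by
    have := hSH.mulVec_eigenvectorBasis i₀
    have h2 : S *ᵥ u = μ • u := this
    rw [h2]
    funext j
    simp [Complex.real_smul]
  have hune : u ≠ 0 := by
    intro h
    have := hSH.eigenvectorBasis.orthonormal.1 i₀
    rw [hudef] at h
    have h0 : hSH.eigenvectorBasis i₀ = 0 := by
      ext j; exact congrFun h j
    rw [h0] at this
    simp at this
  refine ⟨T⁻¹ *ᵥ u, ?_, μ, hμ0, ?_, ?_⟩
  · intro h
    apply hune
    have : T *ᵥ (T⁻¹ *ᵥ u) = u := by rw [mulVec_mulVec, hTinv, one_mulVec]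
    rw [h, mulVec_zero] at this
    exact this.symm
  · have h1 : Rs *ᵥ (T⁻¹ *ᵥ u) = T *ᵥ (S *ᵥ u) := by
      simp only [mulVec_mulVec, hSdef, ← mul_assoc, hTinv, one_mul]
    have h2 : Rn *ᵥ (T⁻¹ *ᵥ u) = T *ᵥ u := by
      rw [mulVec_mulVec, ← hTT, mul_assoc, hTinv, mul_one]
    rw [h1, hu, mulVec_smul, h2]
  · intro v hv
    set x := T *ᵥ v with hxdef
    have hRsx : star v ⬝ᵥ (Rs *ᵥ v) = star x ⬝ᵥ (S *ᵥ x) := by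
      have hRsS : Rs = T * S * T := by
        simp only [hSdef, ← mul_assoc, hTinv, one_mul]
        rw [mul_assoc, hTinv', mul_one]
      rw [hRsS]
      rw [hxdef, star_mulVec, hTH, mulVec_mulVec, ← dotProduct_mulVec, mulVec_mulVec,
        mul_assoc]
    have hRnx : star v ⬝ᵥ (Rn *ᵥ v) = star x ⬝ᵥ x := by
      rw [← hTT, hxdef, star_mulVec, hTH, ← dotProduct_mulVec, mulVec_mulVec]
    rw [hRsx, hRnx]
    -- key: re(xᴴ S x) ≤ μ * re(xᴴ x)
    have hM : ((μ : ℂ) • 1 - S).PosSemidef := by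
      have hspec := hSH.spectral_theorem
      set U : Matrix (Fin N) (Fin N) ℂ := (hSH.eigenvectorUnitary : Matrix (Fin N) (Fin N) ℂ) with hUdef
      have hUU : U * star U = 1 := (Matrix.mem_unitaryGroup_iff).mp hSH.eigenvectorUnitary.2
      have key : (μ : ℂ) • 1 - S
          = U * diagonal (fun i => ((μ - hSH.eigenvalues i : ℝ) : ℂ)) * Uᴴ := by
        have h1 : ((μ : ℂ) • 1 : Matrix (Fin N) (Fin N) ℂ) = U * ((μ : ℂ) • 1) * star U := by
          rw [mul_smul_comm, smul_mul_assoc, mul_one, hUU]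
        calc (μ : ℂ) • 1 - S
            = U * ((μ : ℂ) • 1) * star U - U * diagonal (RCLike.ofReal ∘ hSH.eigenvalues) * star U := by
              rw [← h1]; congr 1
          _ = U * (((μ : ℂ) • 1) - diagonal (RCLike.ofReal ∘ hSH.eigenvalues)) * star U := by
              rw [mul_sub, sub_mul]
          _ = U * diagonal (fun i => ((μ - hSH.eigenvalues i : ℝ) : ℂ)) * Uᴴ := by
              congr 1
              rw [smul_one_eq_diagonal, diagonal_sub]
              congr 1
              funext i
              simp [Function.comp, Complex.ofReal_sub]
      rw [key]
      apply Matrix.PosSemidef.mul_mul_conjTranspose_same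
      refine posSemidef_diagonal_iff.mpr fun i => ?_
      exact Complex.zero_le_real.mpr (sub_nonneg.mpr (hi₀ i))
    have hpos := hM.dotProduct_mulVec_nonneg x
    have heq : star x ⬝ᵥ (((μ : ℂ) • 1 - S) *ᵥ x)
        = (μ : ℂ) * (star x ⬝ᵥ x) - star x ⬝ᵥ (S *ᵥ x) := by
      rw [sub_mulVec, dotProduct_sub, smul_mulVec, one_mulVec, dotProduct_smul,
        smul_eq_mul]
    rw [heq] at hpos
    have := (Complex.le_def.mp hpos).1
    simp only [Complex.zero_re, Complex.sub_re, Complex.mul_re, Complex.ofReal_re,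
      Complex.ofReal_im, zero_mul, sub_zero] at this
    linarith
end

section
/- Let N ≥ 1 and let T be the N×N exchange matrix with entries T i j = 1 if (i : ℕ) + (j : ℕ) = N − 1 and 0 otherwise. Let R₁, R₂ be N×N complex matrices with R₁ invertible, T * (R₁.map conj) * T = R₁ and T * (R₂.map conj) * T = R₂. If λ is real and w satisfies (R₁⁻¹ * R₂) *ᵥ w = λ • w, then (R₁⁻¹ * R₂) *ᵥ (T *ᵥ (star w)) = λ • (T *ᵥ (star w)). Moreover, if w ≠ 0 and every vector u with (R₁⁻¹ * R₂) *ᵥ u = λ • u is a complex scalar multiple of w, then there exists c : ℂ with T *ᵥ (star w) = c • w. -/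
open Matrix

lemma aux_map_conj_mulVec {N : ℕ} (A : Matrix (Fin N) (Fin N) ℂ) (v : Fin N → ℂ) :
    (A.map (starRingEnd ℂ)) *ᵥ (star v) = star (A *ᵥ v) := by
  ext i
  simp only [Matrix.mulVec, dotProduct, Pi.star_apply, Matrix.map_apply,
    star_sum, star_mul', starRingEnd_apply]

theorem stmt_9 (N : ℕ) (hN : 1 ≤ N) (T R₁ R₂ : Matrix (Fin N) (Fin N) ℂ)
    (hT : ∀ i j : Fin N, T i j = if (i : ℕ) + (j : ℕ) = N - 1 then 1 else 0)
    (hinv : IsUnit R₁.det)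
    (h1 : T * R₁.map (starRingEnd ℂ) * T = R₁)
    (h2 : T * R₂.map (starRingEnd ℂ) * T = R₂)
    (lam : ℝ) (w : Fin N → ℂ)
    (hw : (R₁⁻¹ * R₂) *ᵥ w = (lam : ℂ) • w) :
    (R₁⁻¹ * R₂) *ᵥ (T *ᵥ star w) = (lam : ℂ) • (T *ᵥ star w) ∧
      (w ≠ 0 →
        (∀ u : Fin N → ℂ, (R₁⁻¹ * R₂) *ᵥ u = (lam : ℂ) • u → ∃ c : ℂ, u = c • w) →
        ∃ c : ℂ, T *ᵥ star w = c • w) := by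
  -- T entries via Fin.rev
  have hT' : ∀ i j : Fin N, T i j = if j = Fin.rev i then 1 else 0 := by
    intro i j
    rw [hT]
    have hiff : ((i : ℕ) + (j : ℕ) = N - 1) ↔ (j = Fin.rev i) := by
      rw [Fin.ext_iff, Fin.val_rev]
      have hi := i.isLt
      have hj := j.isLt
      omega
    simp [hiff]
  have hTT : T * T = 1 := by
    ext i k
    rw [Matrix.mul_apply]
    simp only [hT', ite_mul, one_mul, zero_mul]
    rw [Finset.sum_ite_eq' Finset.univ (Fin.rev i) (fun x => if k = Fin.rev x then (1:ℂ) else 0)]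
    simp [Matrix.one_apply, Fin.rev_rev, eq_comm]
  have cancel : ∀ M : Matrix (Fin N) (Fin N) ℂ, T * (T * M * T) * T = M := by
    intro M
    simp only [← Matrix.mul_assoc, hTT, Matrix.one_mul]
    rw [Matrix.mul_assoc, hTT, Matrix.mul_one]
  have hc1 : R₁.map (starRingEnd ℂ) = T * R₁ * T := by
    conv_rhs => rw [← h1]
    rw [cancel]
  have hc2 : R₂.map (starRingEnd ℂ) = T * R₂ * T := by
    conv_rhs => rw [← h2]
    rw [cancel]
  have hR1inv : R₁⁻¹ * R₁ = 1 := Matrix.nonsing_inv_mul R₁ hinv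
  have hR1inv' : R₁ * R₁⁻¹ = 1 := Matrix.mul_nonsing_inv R₁ hinv
  have key : R₂ *ᵥ w = (lam : ℂ) • (R₁ *ᵥ w) := by
    have h := congrArg (fun v => R₁ *ᵥ v) hw
    simp only [Matrix.mulVec_mulVec, Matrix.mulVec_smul, ← Matrix.mul_assoc,
      hR1inv', Matrix.one_mul] at h
    exact h
  have keyc : (T * R₂ * T) *ᵥ (star w) = (lam : ℂ) • ((T * R₁ * T) *ᵥ (star w)) := by
    rw [← hc1, ← hc2, aux_map_conj_mulVec, aux_map_conj_mulVec, key, star_smul]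
    simp [Complex.star_def, Complex.conj_ofReal]
  have keyT : (R₂ * T) *ᵥ (star w) = (lam : ℂ) • ((R₁ * T) *ᵥ (star w)) := by
    have h := congrArg (fun v => T *ᵥ v) keyc
    simp only [Matrix.mulVec_mulVec, Matrix.mulVec_smul, ← Matrix.mul_assoc,
      hTT, Matrix.one_mul] at h
    exact h
  have main : (R₁⁻¹ * R₂) *ᵥ (T *ᵥ star w) = (lam : ℂ) • (T *ᵥ star w) := by
    have h := congrArg (fun v => R₁⁻¹ *ᵥ v) keyT
    simp only [Matrix.mulVec_mulVec, Matrix.mulVec_smul, ← Matrix.mul_assoc,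
      hR1inv, Matrix.one_mul] at h
    simp only [Matrix.mulVec_mulVec, ← Matrix.mul_assoc]
    exact h
  exact ⟨main, fun _ huniq => huniq _ main⟩
end

section
/- Let N ≥ 1 and let p : Fin N → ℝ be sensor positions that are centro-symmetric, i.e., there exists a real P with p(N−1−k) = P − p(k) for every k. Let φ be real and define a : Fin N → ℂ by a k = exp(I·φ·p k). Then the rank-one matrix R with (i,j) entry a i * conj (a j) satisfies T * (R.map conj) * T = R, where T is the N×N exchange matrix with entries T i j = 1 if (i : ℕ) + (j : ℕ) = N − 1 and 0 otherwise. -/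
open Matrix

theorem stmt_10 (N : ℕ) (hN : 1 ≤ N) (p : Fin N → ℝ) (P : ℝ)
    (hp : ∀ k : Fin N, p (Fin.rev k) = P - p k)
    (φ : ℝ) (a : Fin N → ℂ)
    (ha : ∀ k, a k = Complex.exp (Complex.I * (φ : ℂ) * (p k : ℂ)))
    (R : Matrix (Fin N) (Fin N) ℂ) (hR : R = Matrix.vecMulVec a (star a))
    (T : Matrix (Fin N) (Fin N) ℂ)
    (hT : ∀ i j : Fin N, T i j = if (i : ℕ) + (j : ℕ) = N - 1 then 1 else 0) :
    T * R.map (starRingEnd ℂ) * T = R := by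
  have hTr : ∀ i k : Fin N, ((i : ℕ) + (k : ℕ) = N - 1) ↔ k = i.rev := by
    intro i k
    rw [Fin.ext_iff, Fin.val_rev]
    omega
  have key : ∀ i : Fin N, (i : ℕ) + (i.rev : ℕ) = N - 1 := by
    intro i; rw [Fin.val_rev]; omega
  have hconj : ∀ x : ℝ, (starRingEnd ℂ) (Complex.exp (Complex.I * (φ : ℂ) * (x : ℂ)))
      = Complex.exp (Complex.I * (φ : ℂ) * (((-x : ℝ)) : ℂ)) := by
    intro x
    rw [← Complex.exp_conj]
    congr 1
    push_cast
    simp [Complex.conj_I]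
  ext i j
  rw [Matrix.mul_apply]
  have h1 : ∀ l : Fin N, (T * R.map (starRingEnd ℂ)) i l
      = (R.map (starRingEnd ℂ)) i.rev l := by
    intro l
    rw [Matrix.mul_apply]
    rw [Finset.sum_eq_single i.rev]
    · rw [hT, if_pos (key i), one_mul]
    · intro b _ hb
      rw [hT, if_neg (fun h => hb ((hTr i b).1 h)), zero_mul]
    · simp
  simp only [h1, hT]
  rw [Finset.sum_eq_single j.rev]
  · have hrev : (j.rev : ℕ) + (j : ℕ) = N - 1 := by
      rw [Fin.val_rev]; omega
    rw [if_pos hrev, mul_one]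
    simp only [Matrix.map_apply, hR, Matrix.vecMulVec_apply, Pi.star_apply, ha, hp]
    simp only [← starRingEnd_apply, _root_.map_mul, hconj, Complex.conj_conj]
    rw [← Complex.exp_add, ← Complex.exp_add]
    congr 1
    push_cast
    ring
  · intro b _ hb
    have : ¬ ((b : ℕ) + (j : ℕ) = N - 1) := by
      intro h
      exact hb ((hTr j b).1 (by omega))
    rw [if_neg this, mul_zero]
  · simp
end

section
/- Let R_s and R_n be N×N complex Hermitian positive semidefinite matrices and put R_x = R_s + R_n. Suppose w₀ satisfies Q_{R_s}(w₀) ≥ 1 and Q_{R_x}(w₀) ≤ Q_{R_x}(w) for every w with Q_{R_s}(w) ≥ 1, where Q_R(v) = re(star v ⬝ᵥ (R *ᵥ v)). Then Q_{R_s}(w₀) = 1, and for every w with Q_{R_s}(w) = 1 one has Q_{R_n}(w₀) ≤ Q_{R_n}(w). -/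
open Matrix
open scoped ComplexOrder

theorem stmt_11 (N : ℕ) (Rs Rn : Matrix (Fin N) (Fin N) ℂ)
    (hRs : Rs.PosSemidef) (hRn : Rn.PosSemidef)
    (Rx : Matrix (Fin N) (Fin N) ℂ) (hRx : Rx = Rs + Rn)
    (w₀ : Fin N → ℂ)
    (hfeas : 1 ≤ (star w₀ ⬝ᵥ (Rs *ᵥ w₀)).re)
    (hopt : ∀ w : Fin N → ℂ, 1 ≤ (star w ⬝ᵥ (Rs *ᵥ w)).re →
      (star w₀ ⬝ᵥ (Rx *ᵥ w₀)).re ≤ (star w ⬝ᵥ (Rx *ᵥ w)).re) :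
    (star w₀ ⬝ᵥ (Rs *ᵥ w₀)).re = 1 ∧
      ∀ w : Fin N → ℂ, (star w ⬝ᵥ (Rs *ᵥ w)).re = 1 →
        (star w₀ ⬝ᵥ (Rn *ᵥ w₀)).re ≤ (star w ⬝ᵥ (Rn *ᵥ w)).re := by
  have key : ∀ (R : Matrix (Fin N) (Fin N) ℂ) (c : ℝ) (v : Fin N → ℂ),
      (star ((c:ℂ) • v) ⬝ᵥ (R *ᵥ ((c:ℂ) • v))).re = c^2 * (star v ⬝ᵥ (R *ᵥ v)).re := by
    intro R c v
    rw [star_smul, Matrix.mulVec_smul, smul_dotProduct, dotProduct_smul,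
      smul_eq_mul, smul_eq_mul, ← mul_assoc]
    simp [Complex.mul_re]
    try ring
    try exact Or.inl trivial
  have hsplit : ∀ v : Fin N → ℂ,
      (star v ⬝ᵥ (Rx *ᵥ v)).re = (star v ⬝ᵥ (Rs *ᵥ v)).re + (star v ⬝ᵥ (Rn *ᵥ v)).re := by
    intro v
    rw [hRx, Matrix.add_mulVec, dotProduct_add, Complex.add_re]
  have hn0 : 0 ≤ (star w₀ ⬝ᵥ (Rn *ᵥ w₀)).re := by
    have := hRn.dotProduct_mulVec_nonneg w₀
    exact_mod_cast (Complex.le_def.mp this).1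
  set s := (star w₀ ⬝ᵥ (Rs *ᵥ w₀)).re with hs
  have hs1 : s = 1 := by
    by_contra h
    have hsgt : 1 < s := lt_of_le_of_ne hfeas (Ne.symm h)
    have hspos : 0 < s := lt_trans one_pos hsgt
    set c : ℝ := (Real.sqrt s)⁻¹ with hc
    have hc2 : c ^ 2 = s⁻¹ := by
      rw [hc, ← Real.sqrt_inv, Real.sq_sqrt (by positivity)]
    have hw : (star ((c:ℂ) • w₀) ⬝ᵥ (Rs *ᵥ ((c:ℂ) • w₀))).re = 1 := by
      rw [key, hc2, ← hs, inv_mul_cancel₀ (ne_of_gt hspos)]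
    have hle := hopt _ (le_of_eq hw.symm)
    rw [key, hc2] at hle
    have hxpos : 0 < (star w₀ ⬝ᵥ (Rx *ᵥ w₀)).re := by
      rw [hsplit]; linarith
    have : s⁻¹ * (star w₀ ⬝ᵥ (Rx *ᵥ w₀)).re < (star w₀ ⬝ᵥ (Rx *ᵥ w₀)).re := by
      have : s⁻¹ < 1 := by
        rw [inv_lt_one_iff₀]; right; exact hsgt
      nlinarith
    linarith
  refine ⟨hs1, fun w hw => ?_⟩
  have hle := hopt w (le_of_eq hw.symm)
  rw [hsplit, hsplit, hw, ← hs, hs1] at hle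
  linarith
end
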